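/- Let A ∈ End(ℝ⁴) and let φ(A) ∈ End(Λ²ℝ⁴) be the induced derivation φ(A)(v∧w) = Av∧w + v∧Aw. Let F ⊆ ℝ⁴ be a line and F¹ ⊇ F a 3-dimensional subspace, and set f := F ∧ F¹ ⊆ Λ²ℝ⁴. Then A F = 0 and A F¹ ⊆ F (i.e., A ∈ Θ) if and only if φ(A) annihilates f and maps f^⊥ into f, where orthogonality is with respect to the wedge-product form; i.e., φ restricts to a linear isomorphism Θ → f ∧ f^⊥. -/

import Mathlib

open ExteriorAlgebra

open Submodule Module
abbrev M4 := Fin 4 → ℝ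
abbrev E4 := ExteriorAlgebra ℝ M4

lemma hswap (x y : M4) : ι ℝ x * ι ℝ y = -(ι ℝ y * ι ℝ x) :=
  eq_neg_of_add_eq_zero_left (ι_add_mul_swap x y)

lemma hswapd (x y : M4) (t : E4) : ι ℝ x * (ι ℝ y * t) = -(ι ℝ y * (ι ℝ x * t)) := by
  rw [← mul_assoc, ← mul_assoc, hswap, neg_mul]

@[simp] lemma hsq (x : M4) : ι ℝ x * ι ℝ x = 0 := ι_sq_zero x

@[simp] lemma hsqd (x : M4) (t : E4) : ι ℝ x * (ι ℝ x * t) = 0 := by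
  rw [← mul_assoc, ι_sq_zero, zero_mul]

lemma mem2 (v w : M4) : ι ℝ v * ι ℝ w ∈ ⋀[ℝ]^2 M4 := by
  rw [exteriorPower, sq]
  exact Submodule.mul_mem_mul (LinearMap.mem_range_self _ _) (LinearMap.mem_range_self _ _)

section
variable (e : Basis (Fin 4) ℝ M4)
@[simp] lemma s10 : ι ℝ (e 1) * ι ℝ (e 0) = -(ι ℝ (e 0) * ι ℝ (e 1)) := hswap _ _
@[simp] lemma s20 : ι ℝ (e 2) * ι ℝ (e 0) = -(ι ℝ (e 0) * ι ℝ (e 2)) := hswap _ _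
@[simp] lemma s21 : ι ℝ (e 2) * ι ℝ (e 1) = -(ι ℝ (e 1) * ι ℝ (e 2)) := hswap _ _
@[simp] lemma s30 : ι ℝ (e 3) * ι ℝ (e 0) = -(ι ℝ (e 0) * ι ℝ (e 3)) := hswap _ _
@[simp] lemma s31 : ι ℝ (e 3) * ι ℝ (e 1) = -(ι ℝ (e 1) * ι ℝ (e 3)) := hswap _ _
@[simp] lemma s32 : ι ℝ (e 3) * ι ℝ (e 2) = -(ι ℝ (e 2) * ι ℝ (e 3)) := hswap _ _
@[simp] lemma d10 (t : E4) : ι ℝ (e 1) * (ι ℝ (e 0) * t) = -(ι ℝ (e 0) * (ι ℝ (e 1) * t)) := hswapd _ _ _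
@[simp] lemma d20 (t : E4) : ι ℝ (e 2) * (ι ℝ (e 0) * t) = -(ι ℝ (e 0) * (ι ℝ (e 2) * t)) := hswapd _ _ _
@[simp] lemma d21 (t : E4) : ι ℝ (e 2) * (ι ℝ (e 1) * t) = -(ι ℝ (e 1) * (ι ℝ (e 2) * t)) := hswapd _ _ _
@[simp] lemma d30 (t : E4) : ι ℝ (e 3) * (ι ℝ (e 0) * t) = -(ι ℝ (e 0) * (ι ℝ (e 3) * t)) := hswapd _ _ _
@[simp] lemma d31 (t : E4) : ι ℝ (e 3) * (ι ℝ (e 1) * t) = -(ι ℝ (e 1) * (ι ℝ (e 3) * t)) := hswapd _ _ _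
@[simp] lemma d32 (t : E4) : ι ℝ (e 3) * (ι ℝ (e 2) * t) = -(ι ℝ (e 2) * (ι ℝ (e 3) * t)) := hswapd _ _ _

@[simp] lemma P01_01 : (ι ℝ (e 0) * ι ℝ (e 1)) * (ι ℝ (e 0) * ι ℝ (e 1)) = 0 := by
  simp [mul_assoc, mul_add, add_mul, smul_mul_assoc, mul_smul_comm, smul_smul]

@[simp] lemma P01_02 : (ι ℝ (e 0) * ι ℝ (e 1)) * (ι ℝ (e 0) * ι ℝ (e 2)) = 0 := by
  simp [mul_assoc, mul_add, add_mul, smul_mul_assoc, mul_smul_comm, smul_smul]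

@[simp] lemma P01_03 : (ι ℝ (e 0) * ι ℝ (e 1)) * (ι ℝ (e 0) * ι ℝ (e 3)) = 0 := by
  simp [mul_assoc, mul_add, add_mul, smul_mul_assoc, mul_smul_comm, smul_smul]

@[simp] lemma P01_12 : (ι ℝ (e 0) * ι ℝ (e 1)) * (ι ℝ (e 1) * ι ℝ (e 2)) = 0 := by
  simp [mul_assoc, mul_add, add_mul, smul_mul_assoc, mul_smul_comm, smul_smul]

@[simp] lemma P01_13 : (ι ℝ (e 0) * ι ℝ (e 1)) * (ι ℝ (e 1) * ι ℝ (e 3)) = 0 := by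
  simp [mul_assoc, mul_add, add_mul, smul_mul_assoc, mul_smul_comm, smul_smul]

@[simp] lemma P01_23 : (ι ℝ (e 0) * ι ℝ (e 1)) * (ι ℝ (e 2) * ι ℝ (e 3)) = (ι ℝ (e 0) * (ι ℝ (e 1) * (ι ℝ (e 2) * ι ℝ (e 3)))) := by
  simp [mul_assoc, mul_add, add_mul, smul_mul_assoc, mul_smul_comm, smul_smul]

@[simp] lemma P02_01 : (ι ℝ (e 0) * ι ℝ (e 2)) * (ι ℝ (e 0) * ι ℝ (e 1)) = 0 := by
  simp [mul_assoc, mul_add, add_mul, smul_mul_assoc, mul_smul_comm, smul_smul]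

@[simp] lemma P02_02 : (ι ℝ (e 0) * ι ℝ (e 2)) * (ι ℝ (e 0) * ι ℝ (e 2)) = 0 := by
  simp [mul_assoc, mul_add, add_mul, smul_mul_assoc, mul_smul_comm, smul_smul]

@[simp] lemma P02_03 : (ι ℝ (e 0) * ι ℝ (e 2)) * (ι ℝ (e 0) * ι ℝ (e 3)) = 0 := by
  simp [mul_assoc, mul_add, add_mul, smul_mul_assoc, mul_smul_comm, smul_smul]

@[simp] lemma P02_12 : (ι ℝ (e 0) * ι ℝ (e 2)) * (ι ℝ (e 1) * ι ℝ (e 2)) = 0 := by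
  simp [mul_assoc, mul_add, add_mul, smul_mul_assoc, mul_smul_comm, smul_smul]

@[simp] lemma P02_13 : (ι ℝ (e 0) * ι ℝ (e 2)) * (ι ℝ (e 1) * ι ℝ (e 3)) = -(ι ℝ (e 0) * (ι ℝ (e 1) * (ι ℝ (e 2) * ι ℝ (e 3)))) := by
  simp [mul_assoc, mul_add, add_mul, smul_mul_assoc, mul_smul_comm, smul_smul]

@[simp] lemma P02_23 : (ι ℝ (e 0) * ι ℝ (e 2)) * (ι ℝ (e 2) * ι ℝ (e 3)) = 0 := by
  simp [mul_assoc, mul_add, add_mul, smul_mul_assoc, mul_smul_comm, smul_smul]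

@[simp] lemma P03_01 : (ι ℝ (e 0) * ι ℝ (e 3)) * (ι ℝ (e 0) * ι ℝ (e 1)) = 0 := by
  simp [mul_assoc, mul_add, add_mul, smul_mul_assoc, mul_smul_comm, smul_smul]

@[simp] lemma P03_02 : (ι ℝ (e 0) * ι ℝ (e 3)) * (ι ℝ (e 0) * ι ℝ (e 2)) = 0 := by
  simp [mul_assoc, mul_add, add_mul, smul_mul_assoc, mul_smul_comm, smul_smul]

@[simp] lemma P03_03 : (ι ℝ (e 0) * ι ℝ (e 3)) * (ι ℝ (e 0) * ι ℝ (e 3)) = 0 := by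
  simp [mul_assoc, mul_add, add_mul, smul_mul_assoc, mul_smul_comm, smul_smul]

@[simp] lemma P03_12 : (ι ℝ (e 0) * ι ℝ (e 3)) * (ι ℝ (e 1) * ι ℝ (e 2)) = (ι ℝ (e 0) * (ι ℝ (e 1) * (ι ℝ (e 2) * ι ℝ (e 3)))) := by
  simp [mul_assoc, mul_add, add_mul, smul_mul_assoc, mul_smul_comm, smul_smul]

@[simp] lemma P03_13 : (ι ℝ (e 0) * ι ℝ (e 3)) * (ι ℝ (e 1) * ι ℝ (e 3)) = 0 := by
  simp [mul_assoc, mul_add, add_mul, smul_mul_assoc, mul_smul_comm, smul_smul]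

@[simp] lemma P03_23 : (ι ℝ (e 0) * ι ℝ (e 3)) * (ι ℝ (e 2) * ι ℝ (e 3)) = 0 := by
  simp [mul_assoc, mul_add, add_mul, smul_mul_assoc, mul_smul_comm, smul_smul]

@[simp] lemma P12_01 : (ι ℝ (e 1) * ι ℝ (e 2)) * (ι ℝ (e 0) * ι ℝ (e 1)) = 0 := by
  simp [mul_assoc, mul_add, add_mul, smul_mul_assoc, mul_smul_comm, smul_smul]

@[simp] lemma P12_02 : (ι ℝ (e 1) * ι ℝ (e 2)) * (ι ℝ (e 0) * ι ℝ (e 2)) = 0 := by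
  simp [mul_assoc, mul_add, add_mul, smul_mul_assoc, mul_smul_comm, smul_smul]

@[simp] lemma P12_03 : (ι ℝ (e 1) * ι ℝ (e 2)) * (ι ℝ (e 0) * ι ℝ (e 3)) = (ι ℝ (e 0) * (ι ℝ (e 1) * (ι ℝ (e 2) * ι ℝ (e 3)))) := by
  simp [mul_assoc, mul_add, add_mul, smul_mul_assoc, mul_smul_comm, smul_smul]

@[simp] lemma P12_12 : (ι ℝ (e 1) * ι ℝ (e 2)) * (ι ℝ (e 1) * ι ℝ (e 2)) = 0 := by
  simp [mul_assoc, mul_add, add_mul, smul_mul_assoc, mul_smul_comm, smul_smul]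

@[simp] lemma P12_13 : (ι ℝ (e 1) * ι ℝ (e 2)) * (ι ℝ (e 1) * ι ℝ (e 3)) = 0 := by
  simp [mul_assoc, mul_add, add_mul, smul_mul_assoc, mul_smul_comm, smul_smul]

@[simp] lemma P12_23 : (ι ℝ (e 1) * ι ℝ (e 2)) * (ι ℝ (e 2) * ι ℝ (e 3)) = 0 := by
  simp [mul_assoc, mul_add, add_mul, smul_mul_assoc, mul_smul_comm, smul_smul]

@[simp] lemma P13_01 : (ι ℝ (e 1) * ι ℝ (e 3)) * (ι ℝ (e 0) * ι ℝ (e 1)) = 0 := by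
  simp [mul_assoc, mul_add, add_mul, smul_mul_assoc, mul_smul_comm, smul_smul]

@[simp] lemma P13_02 : (ι ℝ (e 1) * ι ℝ (e 3)) * (ι ℝ (e 0) * ι ℝ (e 2)) = -(ι ℝ (e 0) * (ι ℝ (e 1) * (ι ℝ (e 2) * ι ℝ (e 3)))) := by
  simp [mul_assoc, mul_add, add_mul, smul_mul_assoc, mul_smul_comm, smul_smul]

@[simp] lemma P13_03 : (ι ℝ (e 1) * ι ℝ (e 3)) * (ι ℝ (e 0) * ι ℝ (e 3)) = 0 := by
  simp [mul_assoc, mul_add, add_mul, smul_mul_assoc, mul_smul_comm, smul_smul]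

@[simp] lemma P13_12 : (ι ℝ (e 1) * ι ℝ (e 3)) * (ι ℝ (e 1) * ι ℝ (e 2)) = 0 := by
  simp [mul_assoc, mul_add, add_mul, smul_mul_assoc, mul_smul_comm, smul_smul]

@[simp] lemma P13_13 : (ι ℝ (e 1) * ι ℝ (e 3)) * (ι ℝ (e 1) * ι ℝ (e 3)) = 0 := by
  simp [mul_assoc, mul_add, add_mul, smul_mul_assoc, mul_smul_comm, smul_smul]

@[simp] lemma P13_23 : (ι ℝ (e 1) * ι ℝ (e 3)) * (ι ℝ (e 2) * ι ℝ (e 3)) = 0 := by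
  simp [mul_assoc, mul_add, add_mul, smul_mul_assoc, mul_smul_comm, smul_smul]

@[simp] lemma P23_01 : (ι ℝ (e 2) * ι ℝ (e 3)) * (ι ℝ (e 0) * ι ℝ (e 1)) = (ι ℝ (e 0) * (ι ℝ (e 1) * (ι ℝ (e 2) * ι ℝ (e 3)))) := by
  simp [mul_assoc, mul_add, add_mul, smul_mul_assoc, mul_smul_comm, smul_smul]

@[simp] lemma P23_02 : (ι ℝ (e 2) * ι ℝ (e 3)) * (ι ℝ (e 0) * ι ℝ (e 2)) = 0 := by
  simp [mul_assoc, mul_add, add_mul, smul_mul_assoc, mul_smul_comm, smul_smul]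

@[simp] lemma P23_03 : (ι ℝ (e 2) * ι ℝ (e 3)) * (ι ℝ (e 0) * ι ℝ (e 3)) = 0 := by
  simp [mul_assoc, mul_add, add_mul, smul_mul_assoc, mul_smul_comm, smul_smul]

@[simp] lemma P23_12 : (ι ℝ (e 2) * ι ℝ (e 3)) * (ι ℝ (e 1) * ι ℝ (e 2)) = 0 := by
  simp [mul_assoc, mul_add, add_mul, smul_mul_assoc, mul_smul_comm, smul_smul]

@[simp] lemma P23_13 : (ι ℝ (e 2) * ι ℝ (e 3)) * (ι ℝ (e 1) * ι ℝ (e 3)) = 0 := by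
  simp [mul_assoc, mul_add, add_mul, smul_mul_assoc, mul_smul_comm, smul_smul]

@[simp] lemma P23_23 : (ι ℝ (e 2) * ι ℝ (e 3)) * (ι ℝ (e 2) * ι ℝ (e 3)) = 0 := by
  simp [mul_assoc, mul_add, add_mul, smul_mul_assoc, mul_smul_comm, smul_smul]


noncomputable def fam (e : Basis (Fin 4) ℝ M4) : ∀ i, M4 [⋀^Fin i]→ₗ[ℝ] ℝ :=
  fun n => match n with
  | 4 => e.det
  | _ => 0

lemma L_prod (e : Basis (Fin 4) ℝ M4) (a b c d : M4) :
    liftAlternating (fam e) (ι ℝ a * (ι ℝ b * (ι ℝ c * ι ℝ d))) = e.det ![a,b,c,d] := by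
  have h : ιMulti ℝ 4 ![a,b,c,d] = ι ℝ a * (ι ℝ b * (ι ℝ c * ι ℝ d)) := by
    rw [ιMulti_apply]
    simp [List.ofFn_succ, mul_assoc]
  rw [← h, liftAlternating_apply_ιMulti]
  rfl

@[simp] lemma Lvol (e : Basis (Fin 4) ℝ M4) :
    liftAlternating (fam e) (ι ℝ (e 0) * (ι ℝ (e 1) * (ι ℝ (e 2) * ι ℝ (e 3)))) = 1 := by
  rw [L_prod]
  have h3 : (![e 0, e 1, e 2, e 3] : Fin 4 → M4) = ⇑e := by
    funext i; fin_cases i <;> rfl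
  rw [h3, Basis.det_self]

lemma iota_repr (v : M4) : ι ℝ v =
    e.repr v 0 • ι ℝ (e 0) + e.repr v 1 • ι ℝ (e 1) + e.repr v 2 • ι ℝ (e 2)
      + e.repr v 3 • ι ℝ (e 3) := by
  have h := e.sum_repr v
  rw [Fin.sum_univ_four] at h
  rw [← h]
  simp [map_add, map_smul, add_assoc]

lemma prod_repr (v w : M4) : ι ℝ v * ι ℝ w =
    (e.repr v 0 * e.repr w 1 - e.repr v 1 * e.repr w 0) • (ι ℝ (e 0) * ι ℝ (e 1))
    + (e.repr v 0 * e.repr w 2 - e.repr v 2 * e.repr w 0) • (ι ℝ (e 0) * ι ℝ (e 2))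
    + (e.repr v 0 * e.repr w 3 - e.repr v 3 * e.repr w 0) • (ι ℝ (e 0) * ι ℝ (e 3))
    + (e.repr v 1 * e.repr w 2 - e.repr v 2 * e.repr w 1) • (ι ℝ (e 1) * ι ℝ (e 2))
    + (e.repr v 1 * e.repr w 3 - e.repr v 3 * e.repr w 1) • (ι ℝ (e 1) * ι ℝ (e 3))
    + (e.repr v 2 * e.repr w 3 - e.repr v 3 * e.repr w 2) • (ι ℝ (e 2) * ι ℝ (e 3)) := by
  rw [iota_repr e v, iota_repr e w]
  simp [mul_add, add_mul, smul_mul_assoc, mul_smul_comm, smul_smul]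
  try module

lemma hspan2 (α : E4) (hα : α ∈ ⋀[ℝ]^2 M4) : ∃ c0 c1 c2 c3 c4 c5 : ℝ,
    α = c0 • (ι ℝ (e 0) * ι ℝ (e 1)) + c1 • (ι ℝ (e 0) * ι ℝ (e 2))
      + c2 • (ι ℝ (e 0) * ι ℝ (e 3)) + c3 • (ι ℝ (e 1) * ι ℝ (e 2))
      + c4 • (ι ℝ (e 1) * ι ℝ (e 3)) + c5 • (ι ℝ (e 2) * ι ℝ (e 3)) := by
  rw [← ιMulti_span_fixedDegree] at hα
  induction hα using Submodule.span_induction with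
  | mem z hz =>
    obtain ⟨v, rfl⟩ := hz
    have h2 : ιMulti ℝ 2 v = ι ℝ (v 0) * ι ℝ (v 1) := by
      rw [ιMulti_apply]
      simp [List.ofFn_succ]
    exact ⟨_, _, _, _, _, _, h2.trans (prod_repr e (v 0) (v 1))⟩
  | zero => exact ⟨0, 0, 0, 0, 0, 0, by simp⟩
  | add y z _ _ hy hz =>
    obtain ⟨c0, c1, c2, c3, c4, c5, hc⟩ := hy
    obtain ⟨d0, d1, d2, d3, d4, d5, hd⟩ := hz
    refine ⟨c0 + d0, c1 + d1, c2 + d2, c3 + d3, c4 + d4, c5 + d5, ?_⟩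
    rw [hc, hd]
    module
  | smul r y _ hy =>
    obtain ⟨c0, c1, c2, c3, c4, c5, hc⟩ := hy
    refine ⟨r * c0, r * c1, r * c2, r * c3, r * c4, r * c5, ?_⟩
    rw [hc]
    module

lemma PHI01 (φ : (M4 →ₗ[ℝ] M4) → (E4 →ₗ[ℝ] E4))
    (hφ : ∀ A (v w : M4), φ A (ι ℝ v * ι ℝ w) = ι ℝ (A v) * ι ℝ w + ι ℝ v * ι ℝ (A w))
    (A : M4 →ₗ[ℝ] M4) :
    φ A (ι ℝ (e 0) * ι ℝ (e 1)) = (e.repr (A (e 0)) 0 + e.repr (A (e 1)) 1) • (ι ℝ (e 0) * ι ℝ (e 1)) + e.repr (A (e 1)) 2 • (ι ℝ (e 0) * ι ℝ (e 2)) + e.repr (A (e 1)) 3 • (ι ℝ (e 0) * ι ℝ (e 3)) + (-e.repr (A (e 0)) 2) • (ι ℝ (e 1) * ι ℝ (e 2)) + (-e.repr (A (e 0)) 3) • (ι ℝ (e 1) * ι ℝ (e 3)) := by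
  rw [hφ, iota_repr e (A (e 0)), iota_repr e (A (e 1))]
  simp [mul_add, add_mul, smul_mul_assoc, mul_smul_comm, smul_smul]
  try module

lemma PHI02 (φ : (M4 →ₗ[ℝ] M4) → (E4 →ₗ[ℝ] E4))
    (hφ : ∀ A (v w : M4), φ A (ι ℝ v * ι ℝ w) = ι ℝ (A v) * ι ℝ w + ι ℝ v * ι ℝ (A w))
    (A : M4 →ₗ[ℝ] M4) :
    φ A (ι ℝ (e 0) * ι ℝ (e 2)) = e.repr (A (e 2)) 1 • (ι ℝ (e 0) * ι ℝ (e 1)) + (e.repr (A (e 0)) 0 + e.repr (A (e 2)) 2) • (ι ℝ (e 0) * ι ℝ (e 2)) + e.repr (A (e 2)) 3 • (ι ℝ (e 0) * ι ℝ (e 3)) + e.repr (A (e 0)) 1 • (ι ℝ (e 1) * ι ℝ (e 2)) + (-e.repr (A (e 0)) 3) • (ι ℝ (e 2) * ι ℝ (e 3)) := by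
  rw [hφ, iota_repr e (A (e 0)), iota_repr e (A (e 2))]
  simp [mul_add, add_mul, smul_mul_assoc, mul_smul_comm, smul_smul]
  try module

lemma PHI03 (φ : (M4 →ₗ[ℝ] M4) → (E4 →ₗ[ℝ] E4))
    (hφ : ∀ A (v w : M4), φ A (ι ℝ v * ι ℝ w) = ι ℝ (A v) * ι ℝ w + ι ℝ v * ι ℝ (A w))
    (A : M4 →ₗ[ℝ] M4) :
    φ A (ι ℝ (e 0) * ι ℝ (e 3)) = e.repr (A (e 3)) 1 • (ι ℝ (e 0) * ι ℝ (e 1)) + e.repr (A (e 3)) 2 • (ι ℝ (e 0) * ι ℝ (e 2)) + (e.repr (A (e 0)) 0 + e.repr (A (e 3)) 3) • (ι ℝ (e 0) * ι ℝ (e 3)) + e.repr (A (e 0)) 1 • (ι ℝ (e 1) * ι ℝ (e 3)) + e.repr (A (e 0)) 2 • (ι ℝ (e 2) * ι ℝ (e 3)) := by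
  rw [hφ, iota_repr e (A (e 0)), iota_repr e (A (e 3))]
  simp [mul_add, add_mul, smul_mul_assoc, mul_smul_comm, smul_smul]
  try module

lemma PHI12 (φ : (M4 →ₗ[ℝ] M4) → (E4 →ₗ[ℝ] E4))
    (hφ : ∀ A (v w : M4), φ A (ι ℝ v * ι ℝ w) = ι ℝ (A v) * ι ℝ w + ι ℝ v * ι ℝ (A w))
    (A : M4 →ₗ[ℝ] M4) :
    φ A (ι ℝ (e 1) * ι ℝ (e 2)) = (-e.repr (A (e 2)) 0) • (ι ℝ (e 0) * ι ℝ (e 1)) + e.repr (A (e 1)) 0 • (ι ℝ (e 0) * ι ℝ (e 2)) + (e.repr (A (e 1)) 1 + e.repr (A (e 2)) 2) • (ι ℝ (e 1) * ι ℝ (e 2)) + e.repr (A (e 2)) 3 • (ι ℝ (e 1) * ι ℝ (e 3)) + (-e.repr (A (e 1)) 3) • (ι ℝ (e 2) * ι ℝ (e 3)) := by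
  rw [hφ, iota_repr e (A (e 1)), iota_repr e (A (e 2))]
  simp [mul_add, add_mul, smul_mul_assoc, mul_smul_comm, smul_smul]
  try module

lemma PHI13 (φ : (M4 →ₗ[ℝ] M4) → (E4 →ₗ[ℝ] E4))
    (hφ : ∀ A (v w : M4), φ A (ι ℝ v * ι ℝ w) = ι ℝ (A v) * ι ℝ w + ι ℝ v * ι ℝ (A w))
    (A : M4 →ₗ[ℝ] M4) :
    φ A (ι ℝ (e 1) * ι ℝ (e 3)) = (-e.repr (A (e 3)) 0) • (ι ℝ (e 0) * ι ℝ (e 1)) + e.repr (A (e 1)) 0 • (ι ℝ (e 0) * ι ℝ (e 3)) + e.repr (A (e 3)) 2 • (ι ℝ (e 1) * ι ℝ (e 2)) + (e.repr (A (e 1)) 1 + e.repr (A (e 3)) 3) • (ι ℝ (e 1) * ι ℝ (e 3)) + e.repr (A (e 1)) 2 • (ι ℝ (e 2) * ι ℝ (e 3)) := by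
  rw [hφ, iota_repr e (A (e 1)), iota_repr e (A (e 3))]
  simp [mul_add, add_mul, smul_mul_assoc, mul_smul_comm, smul_smul]
  try module

lemma PHI23 (φ : (M4 →ₗ[ℝ] M4) → (E4 →ₗ[ℝ] E4))
    (hφ : ∀ A (v w : M4), φ A (ι ℝ v * ι ℝ w) = ι ℝ (A v) * ι ℝ w + ι ℝ v * ι ℝ (A w))
    (A : M4 →ₗ[ℝ] M4) :
    φ A (ι ℝ (e 2) * ι ℝ (e 3)) = (-e.repr (A (e 3)) 0) • (ι ℝ (e 0) * ι ℝ (e 2)) + e.repr (A (e 2)) 0 • (ι ℝ (e 0) * ι ℝ (e 3)) + (-e.repr (A (e 3)) 1) • (ι ℝ (e 1) * ι ℝ (e 2)) + e.repr (A (e 2)) 1 • (ι ℝ (e 1) * ι ℝ (e 3)) + (e.repr (A (e 2)) 2 + e.repr (A (e 3)) 3) • (ι ℝ (e 2) * ι ℝ (e 3)) := by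
  rw [hφ, iota_repr e (A (e 2)), iota_repr e (A (e 3))]
  simp [mul_add, add_mul, smul_mul_assoc, mul_smul_comm, smul_smul]
  try module

end

lemma exists_flag_basis (F F₁ : Submodule ℝ M4)
    (hF : Module.finrank ℝ F = 1) (hF₁ : Module.finrank ℝ F₁ = 3) (hle : F ≤ F₁) :
    ∃ e : Basis (Fin 4) ℝ M4, F = span ℝ {e 0} ∧ F₁ = span ℝ {e 0, e 1, e 2} := by
  classical
  obtain ⟨v0, hv0⟩ : F.IsPrincipal := (F.finrank_le_one_iff_isPrincipal).1 (le_of_eq hF)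
  have hFspan : F = span ℝ {v0} := hv0
  have hv0ne : v0 ≠ 0 := by
    rintro rfl
    rw [hFspan, span_zero_singleton] at hF
    simp [finrank_bot] at hF
  have hv0F₁ : v0 ∈ F₁ := hle (hFspan ▸ mem_span_singleton_self v0)
  -- v1
  have hr1 : finrank ℝ (span ℝ (Set.range ![v0])) = 1 := by
    rw [show Set.range ![v0] = {v0} by simp]
    exact finrank_span_singleton hv0ne
  have hle1 : span ℝ (Set.range ![v0]) ≤ F₁ := by
    rw [span_le]; rintro x hx; simp at hx; subst hx; exact hv0F₁
  obtain ⟨v1, hv1F₁, hv1⟩ : ∃ v ∈ F₁, v ∉ span ℝ (Set.range ![v0]) := by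
    obtain ⟨v, h1, h2⟩ := SetLike.exists_of_lt (lt_of_le_of_ne hle1 (by
      intro h; rw [h, hF₁] at hr1; norm_num at hr1))
    exact ⟨v, h1, h2⟩
  have li1 : LinearIndependent ℝ ![v0] := linearIndependent_unique_iff.2 hv0ne
  have li2 : LinearIndependent ℝ ![v0, v1] := by
    have : (![v0, v1] : Fin 2 → M4) = Fin.snoc ![v0] v1 := by
      funext i; fin_cases i <;> simp [Fin.snoc] <;> rfl
    rw [this, linearIndependent_fin_snoc]
    exact ⟨li1, hv1⟩
  -- v2
  have hr2 : finrank ℝ (span ℝ (Set.range ![v0, v1])) = 2 := by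
    rw [finrank_span_eq_card li2]; simp
  have hle2 : span ℝ (Set.range ![v0, v1]) ≤ F₁ := by
    rw [span_le]; rintro x hx
    rcases hx with ⟨i, rfl⟩; fin_cases i <;> [exact hv0F₁; exact hv1F₁]
  obtain ⟨v2, hv2F₁, hv2⟩ : ∃ v ∈ F₁, v ∉ span ℝ (Set.range ![v0, v1]) := by
    obtain ⟨v, h1, h2⟩ := SetLike.exists_of_lt (lt_of_le_of_ne hle2 (by
      intro h; rw [h, hF₁] at hr2; norm_num at hr2))
    exact ⟨v, h1, h2⟩
  have li3 : LinearIndependent ℝ ![v0, v1, v2] := by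
    have : (![v0, v1, v2] : Fin 3 → M4) = Fin.snoc ![v0, v1] v2 := by
      funext i; fin_cases i <;> simp [Fin.snoc] <;> rfl
    rw [this, linearIndependent_fin_snoc]
    exact ⟨li2, hv2⟩
  have hr3 : finrank ℝ (span ℝ (Set.range ![v0, v1, v2])) = 3 := by
    rw [finrank_span_eq_card li3]; simp
  have hle3 : span ℝ (Set.range ![v0, v1, v2]) ≤ F₁ := by
    rw [span_le]; rintro x hx
    rcases hx with ⟨i, rfl⟩; fin_cases i <;> [exact hv0F₁; exact hv1F₁; exact hv2F₁]
  have hspan3 : span ℝ (Set.range ![v0, v1, v2]) = F₁ :=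
    Submodule.eq_of_le_of_finrank_le hle3 (by rw [hr3, hF₁])
  -- v3
  obtain ⟨v3, hv3⟩ : ∃ v, v ∉ span ℝ (Set.range ![v0, v1, v2]) := by
    by_contra h
    push_neg at h
    have : span ℝ (Set.range ![v0, v1, v2]) = ⊤ := eq_top_iff.2 (fun x _ => h x)
    rw [this] at hr3
    rw [finrank_top] at hr3
    have : finrank ℝ M4 = 4 := by simp [Module.finrank_pi]
    omega
  have li4 : LinearIndependent ℝ ![v0, v1, v2, v3] := by
    have : (![v0, v1, v2, v3] : Fin 4 → M4) = Fin.snoc ![v0, v1, v2] v3 := by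
      funext i; fin_cases i <;> simp [Fin.snoc] <;> rfl
    rw [this, linearIndependent_fin_snoc]
    exact ⟨li3, hv3⟩
  have hcard : Fintype.card (Fin 4) = finrank ℝ M4 := by simp [Module.finrank_pi]
  refine ⟨basisOfLinearIndependentOfCardEqFinrank li4 hcard, ?_, ?_⟩
  · rw [coe_basisOfLinearIndependentOfCardEqFinrank]
    rw [hFspan]; rfl
  · rw [coe_basisOfLinearIndependentOfCardEqFinrank, ← hspan3]
    congr 1
    rw [show Set.range ![v0, v1, v2] = {v0, v1, v2} by
      ext x; simp [Matrix.range_cons, Matrix.range_empty]; tauto]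
    ext x; simp

lemma mem_span_triple {x y w z : M4} :
    z ∈ Submodule.span ℝ ({x, y, w} : Set M4) ↔ ∃ a b c : ℝ, a • x + b • y + c • w = z := by
  constructor
  · intro h
    rw [Submodule.mem_span_insert] at h
    obtain ⟨a, u, hu, rfl⟩ := h
    rw [Submodule.mem_span_pair] at hu
    obtain ⟨b, c, rfl⟩ := hu
    exact ⟨a, b, c, by module⟩
  · rintro ⟨a, b, c, rfl⟩
    refine Submodule.add_mem _ (Submodule.add_mem _ ?_ ?_) ?_ <;>
      exact Submodule.smul_mem _ _ (Submodule.subset_span (by simp))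



lemma trace_formula (e : Basis (Fin 4) ℝ M4) (A : M4 →ₗ[ℝ] M4) :
    LinearMap.trace ℝ M4 A = e.repr (A (e 0)) 0 + e.repr (A (e 1)) 1
      + e.repr (A (e 2)) 2 + e.repr (A (e 3)) 3 := by
  rw [LinearMap.trace_eq_matrix_trace ℝ e, Matrix.trace]
  simp [Matrix.diag, LinearMap.toMatrix_apply, Fin.sum_univ_four]

lemma theta_coords (e : Basis (Fin 4) ℝ M4) (A : M4 →ₗ[ℝ] M4)
    (htr : LinearMap.trace ℝ M4 A = 0)
    (h0 : A (e 0) = 0) (h1 : A (e 1) ∈ span ℝ {e 0}) (h2 : A (e 2) ∈ span ℝ {e 0}) :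
    ∃ p1 p2 q0 q1 q2 : ℝ, A (e 1) = p1 • e 0 ∧ A (e 2) = p2 • e 0 ∧
      A (e 3) = q0 • e 0 + q1 • e 1 + q2 • e 2 := by
  rw [mem_span_singleton] at h1 h2
  obtain ⟨p1, hp1⟩ := h1
  obtain ⟨p2, hp2⟩ := h2
  rw [trace_formula e A] at htr
  have ha00 : e.repr (A (e 0)) 0 = 0 := by simp [h0]
  have ha11 : e.repr (A (e 1)) 1 = 0 := by simp [← hp1, e.repr_self, Finsupp.single_apply]
  have ha22 : e.repr (A (e 2)) 2 = 0 := by simp [← hp2, e.repr_self, Finsupp.single_apply]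
  have ha33 : e.repr (A (e 3)) 3 = 0 := by rw [ha00, ha11, ha22] at htr; linarith
  refine ⟨p1, p2, e.repr (A (e 3)) 0, e.repr (A (e 3)) 1, e.repr (A (e 3)) 2,
    hp1.symm, hp2.symm, ?_⟩
  have hs := e.sum_repr (A (e 3))
  rw [Fin.sum_univ_four, ha33] at hs
  rw [← hs]
  simp

lemma PHI_theta (e : Basis (Fin 4) ℝ M4) (φ : (M4 →ₗ[ℝ] M4) → (E4 →ₗ[ℝ] E4))
    (hφ : ∀ A (v w : M4), φ A (ι ℝ v * ι ℝ w) = ι ℝ (A v) * ι ℝ w + ι ℝ v * ι ℝ (A w))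
    (A : M4 →ₗ[ℝ] M4) (p1 p2 q0 q1 q2 : ℝ)
    (h0 : A (e 0) = 0) (h1 : A (e 1) = p1 • e 0) (h2 : A (e 2) = p2 • e 0)
    (h3 : A (e 3) = q0 • e 0 + q1 • e 1 + q2 • e 2) :
    φ A (ι ℝ (e 0) * ι ℝ (e 1)) = 0 ∧
    φ A (ι ℝ (e 0) * ι ℝ (e 2)) = 0 ∧
    φ A (ι ℝ (e 0) * ι ℝ (e 3)) = q1 • (ι ℝ (e 0) * ι ℝ (e 1)) + q2 • (ι ℝ (e 0) * ι ℝ (e 2)) ∧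
    φ A (ι ℝ (e 1) * ι ℝ (e 2)) = (-p2) • (ι ℝ (e 0) * ι ℝ (e 1)) + p1 • (ι ℝ (e 0) * ι ℝ (e 2)) ∧
    φ A (ι ℝ (e 1) * ι ℝ (e 3)) = (-q0) • (ι ℝ (e 0) * ι ℝ (e 1)) + p1 • (ι ℝ (e 0) * ι ℝ (e 3))
      + q2 • (ι ℝ (e 1) * ι ℝ (e 2)) ∧
    φ A (ι ℝ (e 2) * ι ℝ (e 3)) = (-q0) • (ι ℝ (e 0) * ι ℝ (e 2)) + p2 • (ι ℝ (e 0) * ι ℝ (e 3))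
      + (-q1) • (ι ℝ (e 1) * ι ℝ (e 2)) := by
  have r0 : ∀ k, e.repr (A (e 0)) k = 0 := by intro k; simp [h0]
  have r1 : ∀ k, e.repr (A (e 1)) k = if k = 0 then p1 else 0 := by
    intro k; simp [h1, e.repr_self, Finsupp.single_apply, eq_comm]
  have r2 : ∀ k, e.repr (A (e 2)) k = if k = 0 then p2 else 0 := by
    intro k; simp [h2, e.repr_self, Finsupp.single_apply, eq_comm]
  have r3 : ∀ k, e.repr (A (e 3)) k =
      if k = 0 then q0 else if k = 1 then q1 else if k = 2 then q2 else 0 := by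
    intro k; fin_cases k <;> simp [h3, e.repr_self, Finsupp.single_apply]
  refine ⟨?_, ?_, ?_, ?_, ?_, ?_⟩
  · rw [PHI01 e φ hφ A]; simp [r0, r1]
  · rw [PHI02 e φ hφ A]; simp [r0, r2]
  · rw [PHI03 e φ hφ A]; simp [r0, r3]
  · rw [PHI12 e φ hφ A]; simp [r1, r2]; try module
  · rw [PHI13 e φ hφ A]; simp [r1, r3]; try module
  · rw [PHI23 e φ hφ A]; simp [r2, r3]; try module

set_option maxHeartbeats 4000000 in
/-- for a flag `F ⊆ F₁ ⊆ ℝ⁴` (`dim F = 1`, `dim F₁ = 3`) set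
`f := F ∧ F₁ ⊆ Λ²ℝ⁴`.  For trace-free `A`, `A F = 0 ∧ A F₁ ⊆ F` (i.e. `A ∈ Θ`) iff the
induced derivation `φ(A)` annihilates `f` and maps `f^⊥` into `f` (orthogonality for the
wedge form `B`); moreover `φ` restricts to a linear isomorphism `Θ → f ∧ f^⊥`:
it is injective on `Θ`, and every skew-adjoint endomorphism of `Λ²ℝ⁴` killing `f` and
mapping `f^⊥` into `f` arises as `φ(A)` for some `A ∈ Θ`. -/
theorem theta_iso_f_wedge_f_perp
    (Ω : ExteriorAlgebra ℝ (Fin 4 → ℝ)) (hΩmem : Ω ∈ ⋀[ℝ]^4 (Fin 4 → ℝ)) (hΩ : Ω ≠ 0)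
    (B : ExteriorAlgebra ℝ (Fin 4 → ℝ) → ExteriorAlgebra ℝ (Fin 4 → ℝ) → ℝ)
    (hB : ∀ α ∈ ⋀[ℝ]^2 (Fin 4 → ℝ), ∀ β ∈ ⋀[ℝ]^2 (Fin 4 → ℝ), α * β = B α β • Ω)
    (φ : ((Fin 4 → ℝ) →ₗ[ℝ] (Fin 4 → ℝ)) →
      (ExteriorAlgebra ℝ (Fin 4 → ℝ) →ₗ[ℝ] ExteriorAlgebra ℝ (Fin 4 → ℝ)))
    (hφmem : ∀ A, ∀ α ∈ ⋀[ℝ]^2 (Fin 4 → ℝ), φ A α ∈ ⋀[ℝ]^2 (Fin 4 → ℝ))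
    (hφ : ∀ A (v w : Fin 4 → ℝ),
      φ A (ι ℝ v * ι ℝ w) = ι ℝ (A v) * ι ℝ w + ι ℝ v * ι ℝ (A w))
    (F F₁ : Submodule ℝ (Fin 4 → ℝ))
    (hF : Module.finrank ℝ F = 1) (hF₁ : Module.finrank ℝ F₁ = 3) (hle : F ≤ F₁)
    (f : Submodule ℝ (ExteriorAlgebra ℝ (Fin 4 → ℝ)))
    (hf : f = Submodule.span ℝ {α | ∃ v ∈ F, ∃ w ∈ F₁, α = ι ℝ v * ι ℝ w}) :
    (∀ A : (Fin 4 → ℝ) →ₗ[ℝ] (Fin 4 → ℝ), LinearMap.trace ℝ (Fin 4 → ℝ) A = 0 →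
      (((∀ v ∈ F, A v = 0) ∧ (∀ v ∈ F₁, A v ∈ F)) ↔
        ((∀ α ∈ f, φ A α = 0) ∧
         (∀ β ∈ ⋀[ℝ]^2 (Fin 4 → ℝ), (∀ α ∈ f, B α β = 0) → φ A β ∈ f)))) ∧
    (∀ A A' : (Fin 4 → ℝ) →ₗ[ℝ] (Fin 4 → ℝ),
      LinearMap.trace ℝ (Fin 4 → ℝ) A = 0 → LinearMap.trace ℝ (Fin 4 → ℝ) A' = 0 →
      (∀ v ∈ F, A v = 0) → (∀ v ∈ F₁, A v ∈ F) →
      (∀ v ∈ F, A' v = 0) → (∀ v ∈ F₁, A' v ∈ F) →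
      (∀ α ∈ ⋀[ℝ]^2 (Fin 4 → ℝ), φ A α = φ A' α) → A = A') ∧
    (∀ C : ExteriorAlgebra ℝ (Fin 4 → ℝ) →ₗ[ℝ] ExteriorAlgebra ℝ (Fin 4 → ℝ),
      (∀ α ∈ ⋀[ℝ]^2 (Fin 4 → ℝ), C α ∈ ⋀[ℝ]^2 (Fin 4 → ℝ)) →
      (∀ α ∈ ⋀[ℝ]^2 (Fin 4 → ℝ), ∀ β ∈ ⋀[ℝ]^2 (Fin 4 → ℝ),
        B (C α) β = - B α (C β)) →
      (∀ α ∈ f, C α = 0) →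
      (∀ β ∈ ⋀[ℝ]^2 (Fin 4 → ℝ), (∀ α ∈ f, B α β = 0) → C β ∈ f) →
      ∃ A : (Fin 4 → ℝ) →ₗ[ℝ] (Fin 4 → ℝ), LinearMap.trace ℝ (Fin 4 → ℝ) A = 0 ∧
        (∀ v ∈ F, A v = 0) ∧ (∀ v ∈ F₁, A v ∈ F) ∧
        ∀ α ∈ ⋀[ℝ]^2 (Fin 4 → ℝ), C α = φ A α) := by
  classical
  obtain ⟨e, hFe, hF₁e⟩ := exists_flag_basis F F₁ hF hF₁ hle
  have he0F : e 0 ∈ F := by rw [hFe]; exact mem_span_singleton_self _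
  have he1F₁ : e 1 ∈ F₁ := by rw [hF₁e]; exact subset_span (by simp)
  have he2F₁ : e 2 ∈ F₁ := by rw [hF₁e]; exact subset_span (by simp)
  have hx01f : (ι ℝ (e 0) * ι ℝ (e 1)) ∈ f := by
    rw [hf]; exact subset_span ⟨e 0, he0F, e 1, he1F₁, rfl⟩
  have hx02f : (ι ℝ (e 0) * ι ℝ (e 2)) ∈ f := by
    rw [hf]; exact subset_span ⟨e 0, he0F, e 2, he2F₁, rfl⟩
  have hfeq : f = span ℝ {ι ℝ (e 0) * ι ℝ (e 1), ι ℝ (e 0) * ι ℝ (e 2)} := by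
    apply le_antisymm
    · rw [hf]
      apply span_le.2
      rintro α ⟨v, hv, w, hw, rfl⟩
      rw [hFe, mem_span_singleton] at hv
      obtain ⟨t, rfl⟩ := hv
      rw [hF₁e, mem_span_triple] at hw
      obtain ⟨a, b, c, rfl⟩ := hw
      apply mem_span_pair.2
      refine ⟨t * b, t * c, ?_⟩
      simp [mul_add, add_mul, smul_mul_assoc, mul_smul_comm, smul_smul]
      try module
    · apply span_le.2
      rintro α (rfl | rfl)
      · exact hx01f
      · exact hx02f
  have hBzero : ∀ α ∈ ⋀[ℝ]^2 M4, ∀ β ∈ ⋀[ℝ]^2 M4, α * β = 0 → B α β = 0 := by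
    intro α hα β hβ h0
    have h1 := hB α hα β hβ
    rw [h0] at h1
    exact ((smul_eq_zero.1 h1.symm).resolve_right hΩ)
  have hprod0 : ∀ α ∈ ⋀[ℝ]^2 M4, ∀ β ∈ ⋀[ℝ]^2 M4, B α β = 0 → α * β = 0 := by
    intro α hα β hβ h0
    rw [hB α hα β hβ, h0, zero_smul]
  refine ⟨?_, ?_, ?_⟩
  · -- Part 1
    intro A htrA
    constructor
    · rintro ⟨hA0, hA1⟩
      have h0 : A (e 0) = 0 := hA0 _ he0F
      obtain ⟨p1, p2, q0, q1, q2, h1, h2, h3⟩ := theta_coords e A htrA h0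
        (by rw [← hFe]; exact hA1 _ he1F₁) (by rw [← hFe]; exact hA1 _ he2F₁)
      obtain ⟨Φ01, Φ02, Φ03, Φ12, Φ13, Φ23⟩ := PHI_theta e φ hφ A p1 p2 q0 q1 q2 h0 h1 h2 h3
      constructor
      · intro α hα
        rw [hfeq, mem_span_pair] at hα
        obtain ⟨a, b, hab⟩ := hα
        rw [← hab, map_add, map_smul, map_smul, Φ01, Φ02, smul_zero, smul_zero, add_zero]
      · intro β hβ hperp
        obtain ⟨c0, c1, c2, c3, c4, c5, hc⟩ := hspan2 e β hβ
        have h01β : (ι ℝ (e 0) * ι ℝ (e 1)) * β = 0 :=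
          hprod0 _ (mem2 _ _) _ hβ (hperp _ hx01f)
        have h02β : (ι ℝ (e 0) * ι ℝ (e 2)) * β = 0 :=
          hprod0 _ (mem2 _ _) _ hβ (hperp _ hx02f)
        rw [hc] at h01β h02β
        have hc5 : c5 = 0 := by
          have h2 := congrArg (liftAlternating (fam e)) h01β
          simpa [mul_add, mul_smul_comm] using h2
        have hc4 : c4 = 0 := by
          have h2 := congrArg (liftAlternating (fam e)) h02β
          simpa [mul_add, mul_smul_comm] using h2
        rw [hc, hc4, hc5, zero_smul, zero_smul, add_zero, add_zero]
        rw [hfeq]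
        simp only [map_add, map_smul, Φ01, Φ02, Φ03, Φ12, smul_zero, zero_add]
        refine add_mem (smul_mem _ _ ?_) (smul_mem _ _ ?_) <;>
          exact add_mem (smul_mem _ _ (subset_span (by simp))) (smul_mem _ _ (subset_span (by simp)))
    · rintro ⟨hkill, hmap⟩
      have h01 : φ A (ι ℝ (e 0) * ι ℝ (e 1)) = 0 := hkill _ hx01f
      have h02 : φ A (ι ℝ (e 0) * ι ℝ (e 2)) = 0 := hkill _ hx02f
      have h12perp : ∀ α ∈ f, B α (ι ℝ (e 1) * ι ℝ (e 2)) = 0 := by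
        intro α hα
        rw [hfeq, mem_span_pair] at hα
        obtain ⟨a, b, hab⟩ := hα
        refine hBzero _ ?_ _ (mem2 _ _) ?_
        · rw [← hab]; exact add_mem (smul_mem _ _ (mem2 _ _)) (smul_mem _ _ (mem2 _ _))
        · rw [← hab]; simp [add_mul, smul_mul_assoc]
      have h12f : φ A (ι ℝ (e 1) * ι ℝ (e 2)) ∈ f := hmap _ (mem2 _ _) h12perp
      rw [hfeq, mem_span_pair] at h12f
      obtain ⟨u, v, huv⟩ := h12f
      rw [PHI01 e φ hφ A] at h01
      rw [PHI02 e φ hφ A] at h02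
      rw [PHI12 e φ hφ A] at huv
      -- extractions from h01
      have E1 : e.repr (A (e 0)) 0 + e.repr (A (e 1)) 1 = 0 := by
        have h2 := congrArg (fun z => liftAlternating (fam e) (z * (ι ℝ (e 2) * ι ℝ (e 3)))) h01
        simpa [add_mul, sub_mul, smul_mul_assoc] using h2
      have E2 : e.repr (A (e 1)) 2 = 0 := by
        have h2 := congrArg (fun z => liftAlternating (fam e) (z * (ι ℝ (e 1) * ι ℝ (e 3)))) h01
        simpa [add_mul, sub_mul, smul_mul_assoc] using h2
      have E3 : e.repr (A (e 1)) 3 = 0 := by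
        have h2 := congrArg (fun z => liftAlternating (fam e) (z * (ι ℝ (e 1) * ι ℝ (e 2)))) h01
        simpa [add_mul, sub_mul, smul_mul_assoc] using h2
      have E4 : e.repr (A (e 0)) 2 = 0 := by
        have h2 := congrArg (fun z => liftAlternating (fam e) (z * (ι ℝ (e 0) * ι ℝ (e 3)))) h01
        simpa [add_mul, sub_mul, smul_mul_assoc] using h2
      have E5 : e.repr (A (e 0)) 3 = 0 := by
        have h2 := congrArg (fun z => liftAlternating (fam e) (z * (ι ℝ (e 0) * ι ℝ (e 2)))) h01
        simpa [add_mul, sub_mul, smul_mul_assoc] using h2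
      -- extractions from h02
      have E6 : e.repr (A (e 2)) 1 = 0 := by
        have h2 := congrArg (fun z => liftAlternating (fam e) (z * (ι ℝ (e 2) * ι ℝ (e 3)))) h02
        simpa [add_mul, sub_mul, smul_mul_assoc] using h2
      have E7 : e.repr (A (e 0)) 0 + e.repr (A (e 2)) 2 = 0 := by
        have h2 := congrArg (fun z => liftAlternating (fam e) (z * (ι ℝ (e 1) * ι ℝ (e 3)))) h02
        have h3 : -(e.repr (A (e 0)) 0 + e.repr (A (e 2)) 2) = 0 := by
          simpa [add_mul, sub_mul, smul_mul_assoc] using h2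
        linarith
      have E8 : e.repr (A (e 2)) 3 = 0 := by
        have h2 := congrArg (fun z => liftAlternating (fam e) (z * (ι ℝ (e 1) * ι ℝ (e 2)))) h02
        simpa [add_mul, sub_mul, smul_mul_assoc] using h2
      have E9 : e.repr (A (e 0)) 1 = 0 := by
        have h2 := congrArg (fun z => liftAlternating (fam e) (z * (ι ℝ (e 0) * ι ℝ (e 3)))) h02
        simpa [add_mul, sub_mul, smul_mul_assoc] using h2
      -- extraction from huv : coefficient of x12
      have E11 : e.repr (A (e 1)) 1 + e.repr (A (e 2)) 2 = 0 := by
        have h2 := congrArg (fun z => liftAlternating (fam e) (z * (ι ℝ (e 0) * ι ℝ (e 3)))) huv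
        simpa [add_mul, sub_mul, smul_mul_assoc] using h2.symm
      have ha00 : e.repr (A (e 0)) 0 = 0 := by linarith
      have ha11 : e.repr (A (e 1)) 1 = 0 := by linarith
      have ha22 : e.repr (A (e 2)) 2 = 0 := by linarith
      have hA0 : A (e 0) = 0 := by
        have hs := e.sum_repr (A (e 0))
        rw [Fin.sum_univ_four, ha00, E9, E4, E5] at hs
        simpa using hs.symm
      have hA1 : A (e 1) = e.repr (A (e 1)) 0 • e 0 := by
        have hs := e.sum_repr (A (e 1))
        rw [Fin.sum_univ_four, ha11, E2, E3] at hs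
        simpa using hs.symm
      have hA2 : A (e 2) = e.repr (A (e 2)) 0 • e 0 := by
        have hs := e.sum_repr (A (e 2))
        rw [Fin.sum_univ_four, ha22, E6, E8] at hs
        simpa using hs.symm
      constructor
      · intro w hw
        rw [hFe, mem_span_singleton] at hw
        obtain ⟨t, rfl⟩ := hw
        rw [map_smul, hA0, smul_zero]
      · intro w hw
        rw [hF₁e, mem_span_triple] at hw
        obtain ⟨a, b, c, rfl⟩ := hw
        obtain ⟨r1, hA1'⟩ : ∃ r, A (e 1) = r • e 0 := ⟨_, hA1⟩
        obtain ⟨r2, hA2'⟩ : ∃ r, A (e 2) = r • e 0 := ⟨_, hA2⟩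
        have : A (a • e 0 + b • e 1 + c • e 2) = (b * r1 + c * r2) • e 0 := by
          rw [map_add, map_add, map_smul, map_smul, map_smul, hA0, hA1', hA2', smul_zero, zero_add]
          module
        rw [this, hFe]
        exact smul_mem _ _ (mem_span_singleton_self _)
  · -- Part 2: injectivity
    intro A A' htrA htrA' hA0 hA1 hA0' hA1' heq
    have h0 : A (e 0) = 0 := hA0 _ he0F
    have h0' : A' (e 0) = 0 := hA0' _ he0F
    obtain ⟨p1, p2, q0, q1, q2, h1, h2, h3⟩ := theta_coords e A htrA h0
      (by rw [← hFe]; exact hA1 _ he1F₁) (by rw [← hFe]; exact hA1 _ he2F₁)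
    obtain ⟨p1', p2', q0', q1', q2', h1', h2', h3'⟩ := theta_coords e A' htrA' h0'
      (by rw [← hFe]; exact hA1' _ he1F₁) (by rw [← hFe]; exact hA1' _ he2F₁)
    obtain ⟨Φ01, Φ02, Φ03, Φ12, Φ13, Φ23⟩ := PHI_theta e φ hφ A p1 p2 q0 q1 q2 h0 h1 h2 h3
    obtain ⟨Ψ01, Ψ02, Ψ03, Ψ12, Ψ13, Ψ23⟩ :=
      PHI_theta e φ hφ A' p1' p2' q0' q1' q2' h0' h1' h2' h3'
    have e03 := heq _ (mem2 (e 0) (e 3))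
    rw [Φ03, Ψ03] at e03
    have e12 := heq _ (mem2 (e 1) (e 2))
    rw [Φ12, Ψ12] at e12
    have e13 := heq _ (mem2 (e 1) (e 3))
    rw [Φ13, Ψ13] at e13
    have Eq1 : q1 = q1' := by
      have hL := congrArg (fun z => liftAlternating (fam e) (z * (ι ℝ (e 2) * ι ℝ (e 3)))) e03
      simp [add_mul, smul_mul_assoc] at hL
      linarith
    have Eq2 : q2 = q2' := by
      have hL := congrArg (fun z => liftAlternating (fam e) (z * (ι ℝ (e 1) * ι ℝ (e 3)))) e03
      simp [add_mul, smul_mul_assoc] at hL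
      linarith
    have Ep2 : p2 = p2' := by
      have hL := congrArg (fun z => liftAlternating (fam e) (z * (ι ℝ (e 2) * ι ℝ (e 3)))) e12
      simp [add_mul, smul_mul_assoc] at hL
      linarith
    have Ep1 : p1 = p1' := by
      have hL := congrArg (fun z => liftAlternating (fam e) (z * (ι ℝ (e 1) * ι ℝ (e 3)))) e12
      simp [add_mul, smul_mul_assoc] at hL
      linarith
    have Eq0 : q0 = q0' := by
      have hL := congrArg (fun z => liftAlternating (fam e) (z * (ι ℝ (e 2) * ι ℝ (e 3)))) e13
      simp [add_mul, smul_mul_assoc] at hL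
      linarith
    apply Basis.ext e
    intro i
    fin_cases i
    · rw [show ((⟨0, by norm_num⟩ : Fin 4) : Fin 4) = 0 from rfl, h0, h0']
    · rw [show ((⟨1, by norm_num⟩ : Fin 4) : Fin 4) = 1 from rfl, h1, h1', Ep1]
    · rw [show ((⟨2, by norm_num⟩ : Fin 4) : Fin 4) = 2 from rfl, h2, h2', Ep2]
    · rw [show ((⟨3, by norm_num⟩ : Fin 4) : Fin 4) = 3 from rfl, h3, h3', Eq0, Eq1, Eq2]
  · -- Part 3: surjectivity
    intro C hC2 hCskew hCkill hCperp
    have hskewP : ∀ α ∈ ⋀[ℝ]^2 M4, ∀ β ∈ ⋀[ℝ]^2 M4, (C α) * β = -(α * (C β)) := by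
      intro α hα β hβ
      rw [hB _ (hC2 α hα) _ hβ, hB _ hα _ (hC2 β hβ), hCskew α hα β hβ, neg_smul]
    have hC01 : C (ι ℝ (e 0) * ι ℝ (e 1)) = 0 := hCkill _ hx01f
    have hC02 : C (ι ℝ (e 0) * ι ℝ (e 2)) = 0 := hCkill _ hx02f
    have hperp03 : ∀ α ∈ f, B α (ι ℝ (e 0) * ι ℝ (e 3)) = 0 := by
      intro α hα
      rw [hfeq, mem_span_pair] at hα
      obtain ⟨a, b, hab⟩ := hα
      refine hBzero _ ?_ _ (mem2 _ _) ?_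
      · rw [← hab]; exact add_mem (smul_mem _ _ (mem2 _ _)) (smul_mem _ _ (mem2 _ _))
      · rw [← hab]; simp [add_mul, smul_mul_assoc]
    have hperp12 : ∀ α ∈ f, B α (ι ℝ (e 1) * ι ℝ (e 2)) = 0 := by
      intro α hα
      rw [hfeq, mem_span_pair] at hα
      obtain ⟨a, b, hab⟩ := hα
      refine hBzero _ ?_ _ (mem2 _ _) ?_
      · rw [← hab]; exact add_mem (smul_mem _ _ (mem2 _ _)) (smul_mem _ _ (mem2 _ _))
      · rw [← hab]; simp [add_mul, smul_mul_assoc]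
    have hC03f := hCperp _ (mem2 (e 0) (e 3)) hperp03
    have hC12f := hCperp _ (mem2 (e 1) (e 2)) hperp12
    rw [hfeq, mem_span_pair] at hC03f hC12f
    obtain ⟨s1, s2, hs⟩ := hC03f
    obtain ⟨t1, t2, ht⟩ := hC12f
    obtain ⟨u0, u1, u2, u3, u4, u5, hu⟩ := hspan2 e (C (ι ℝ (e 1) * ι ℝ (e 3)))
      (hC2 _ (mem2 _ _))
    obtain ⟨d0, d1, d2, d3, d4, d5, hd⟩ := hspan2 e (C (ι ℝ (e 2) * ι ℝ (e 3)))
      (hC2 _ (mem2 _ _))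
    have hu5 : u5 = 0 := by
      have S := hskewP _ (mem2 (e 0) (e 1)) _ (mem2 (e 1) (e 3))
      rw [hC01, hu] at S
      have hL := congrArg (liftAlternating (fam e)) S
      simp [mul_add, mul_smul_comm, add_mul, smul_mul_assoc, zero_mul] at hL
      linarith
    have hu4 : u4 = 0 := by
      have S := hskewP _ (mem2 (e 0) (e 2)) _ (mem2 (e 1) (e 3))
      rw [hC02, hu] at S
      have hL := congrArg (liftAlternating (fam e)) S
      simp [mul_add, mul_smul_comm, add_mul, smul_mul_assoc, zero_mul] at hL
      linarith
    have hu3 : u3 = s2 := by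
      have S := hskewP _ (mem2 (e 0) (e 3)) _ (mem2 (e 1) (e 3))
      rw [← hs, hu] at S
      have hL := congrArg (liftAlternating (fam e)) S
      simp [mul_add, mul_smul_comm, add_mul, smul_mul_assoc] at hL
      linarith
    have hu2 : u2 = t2 := by
      have S := hskewP _ (mem2 (e 1) (e 2)) _ (mem2 (e 1) (e 3))
      rw [← ht, hu] at S
      have hL := congrArg (liftAlternating (fam e)) S
      simp [mul_add, mul_smul_comm, add_mul, smul_mul_assoc] at hL
      linarith
    have hu1 : u1 = 0 := by
      have S := hskewP _ (mem2 (e 1) (e 3)) _ (mem2 (e 1) (e 3))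
      rw [hu] at S
      have hL := congrArg (liftAlternating (fam e)) S
      simp [mul_add, mul_smul_comm, add_mul, smul_mul_assoc] at hL
      linarith
    have hd5 : d5 = 0 := by
      have S := hskewP _ (mem2 (e 0) (e 1)) _ (mem2 (e 2) (e 3))
      rw [hC01, hd] at S
      have hL := congrArg (liftAlternating (fam e)) S
      simp [mul_add, mul_smul_comm, add_mul, smul_mul_assoc, zero_mul] at hL
      linarith
    have hd4 : d4 = 0 := by
      have S := hskewP _ (mem2 (e 0) (e 2)) _ (mem2 (e 2) (e 3))
      rw [hC02, hd] at S
      have hL := congrArg (liftAlternating (fam e)) S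
      simp [mul_add, mul_smul_comm, add_mul, smul_mul_assoc, zero_mul] at hL
      linarith
    have hd3 : d3 = -s1 := by
      have S := hskewP _ (mem2 (e 0) (e 3)) _ (mem2 (e 2) (e 3))
      rw [← hs, hd] at S
      have hL := congrArg (liftAlternating (fam e)) S
      simp [mul_add, mul_smul_comm, add_mul, smul_mul_assoc] at hL
      linarith
    have hd2 : d2 = -t1 := by
      have S := hskewP _ (mem2 (e 1) (e 2)) _ (mem2 (e 2) (e 3))
      rw [← ht, hd] at S
      have hL := congrArg (liftAlternating (fam e)) S
      simp [mul_add, mul_smul_comm, add_mul, smul_mul_assoc] at hL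
      linarith
    have hd1 : d1 = u0 := by
      have S := hskewP _ (mem2 (e 1) (e 3)) _ (mem2 (e 2) (e 3))
      rw [hu, hd] at S
      have hL := congrArg (liftAlternating (fam e)) S
      simp [mul_add, mul_smul_comm, add_mul, smul_mul_assoc] at hL
      linarith
    have hd0 : d0 = 0 := by
      have S := hskewP _ (mem2 (e 2) (e 3)) _ (mem2 (e 2) (e 3))
      rw [hd] at S
      have hL := congrArg (liftAlternating (fam e)) S
      simp [mul_add, mul_smul_comm, add_mul, smul_mul_assoc] at hL
      linarith
    have hCu : C (ι ℝ (e 1) * ι ℝ (e 3)) = u0 • (ι ℝ (e 0) * ι ℝ (e 1))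
        + t2 • (ι ℝ (e 0) * ι ℝ (e 3)) + s2 • (ι ℝ (e 1) * ι ℝ (e 2)) := by
      rw [hu, hu1, hu2, hu3, hu4, hu5]
      module
    have hCd : C (ι ℝ (e 2) * ι ℝ (e 3)) = u0 • (ι ℝ (e 0) * ι ℝ (e 2))
        + (-t1) • (ι ℝ (e 0) * ι ℝ (e 3)) + (-s1) • (ι ℝ (e 1) * ι ℝ (e 2)) := by
      rw [hd, hd0, hd1, hd2, hd3, hd4, hd5]
      module
    refine ⟨e.constr ℝ ![(0 : M4), t2 • e 0, (-t1) • e 0,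
      (-u0) • e 0 + s1 • e 1 + s2 • e 2], ?_, ?_, ?_, ?_⟩
    · rw [trace_formula e _]
      simp [Basis.constr_basis, e.repr_self, Finsupp.single_apply]
    · intro w hw
      rw [hFe, mem_span_singleton] at hw
      obtain ⟨t, rfl⟩ := hw
      rw [map_smul]
      simp [Basis.constr_basis]
    · intro w hw
      rw [hF₁e, mem_span_triple] at hw
      obtain ⟨a, b, c, rfl⟩ := hw
      have hval : (e.constr (M' := M4) ℝ ![(0 : M4), t2 • e 0, (-t1) • e 0,
          (-u0) • e 0 + s1 • e 1 + s2 • e 2]) (a • e 0 + b • e 1 + c • e 2)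
          = (b * t2 + c * (-t1)) • e 0 := by
        rw [map_add, map_add, map_smul, map_smul, map_smul]
        rw [show (e.constr (M' := M4) ℝ ![(0 : M4), t2 • e 0, (-t1) • e 0,
          (-u0) • e 0 + s1 • e 1 + s2 • e 2]) (e 0) = 0 from by simp [Basis.constr_basis]]
        rw [show (e.constr (M' := M4) ℝ ![(0 : M4), t2 • e 0, (-t1) • e 0,
          (-u0) • e 0 + s1 • e 1 + s2 • e 2]) (e 1) = t2 • e 0 from by simp [Basis.constr_basis]]
        rw [show (e.constr (M' := M4) ℝ ![(0 : M4), t2 • e 0, (-t1) • e 0,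
          (-u0) • e 0 + s1 • e 1 + s2 • e 2]) (e 2) = (-t1) • e 0 from by simp [Basis.constr_basis]]
        rw [smul_zero, zero_add]
        module
      rw [hval, hFe]
      exact smul_mem _ _ (mem_span_singleton_self _)
    · intro α hα
      have hA0 : (e.constr (M' := M4) ℝ ![(0 : M4), t2 • e 0, (-t1) • e 0,
          (-u0) • e 0 + s1 • e 1 + s2 • e 2]) (e 0) = 0 := by simp [Basis.constr_basis]
      have hA1 : (e.constr (M' := M4) ℝ ![(0 : M4), t2 • e 0, (-t1) • e 0,
          (-u0) • e 0 + s1 • e 1 + s2 • e 2]) (e 1) = t2 • e 0 := by simp [Basis.constr_basis]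
      have hA2 : (e.constr (M' := M4) ℝ ![(0 : M4), t2 • e 0, (-t1) • e 0,
          (-u0) • e 0 + s1 • e 1 + s2 • e 2]) (e 2) = (-t1) • e 0 := by simp [Basis.constr_basis]
      have hA3 : (e.constr (M' := M4) ℝ ![(0 : M4), t2 • e 0, (-t1) • e 0,
          (-u0) • e 0 + s1 • e 1 + s2 • e 2]) (e 3) = (-u0) • e 0 + s1 • e 1 + s2 • e 2 := by
        simp [Basis.constr_basis]
      obtain ⟨Φ01, Φ02, Φ03, Φ12, Φ13, Φ23⟩ :=
        PHI_theta e φ hφ _ t2 (-t1) (-u0) s1 s2 hA0 hA1 hA2 hA3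
      obtain ⟨c0, c1, c2, c3, c4, c5, hc⟩ := hspan2 e α hα
      rw [hc]
      simp only [map_add, map_smul]
      rw [hC01, hC02, ← hs, ← ht, hCu, hCd, Φ01, Φ02, Φ03, Φ12, Φ13, Φ23]
      module
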